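/- Let X ∈ ℂ^{N×L} be a block-sparse matrix with chunk support contained in T₁, |T₁| ≤ k₁, and let T₂ be a chunk support disjoint from T₁ with |T₂| ≤ k₂. Let P_{(T₂)} = Φ_{[T₂]}(Φ_{[T₂]}^H Φ_{[T₂]})^{−1} Φ_{[T₂]}^H be the orthogonal projection onto the column span of Φ_{[T₂]}. If Φ satisfies the (k₁+k₂)-th order block-RIP with constant δ := δ_{k₁+k₂|d} < 1, then ‖P_{(T₂)} Φ X‖_F ≤ δ √(1+δ) ‖X‖_F. -/

import Mathlib

open Matrix

def BlockRIPBound {M K d : ℕ} (Φ : Matrix (Fin M) (Fin K × Fin d) ℂ)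
    (k : ℕ) (δ : ℝ) : Prop :=
  ∀ x : (Fin K × Fin d) → ℂ,
    {n : Fin K | ∃ j, x (n, j) ≠ 0}.ncard ≤ k →
      ((1 - δ) * ∑ p, ‖x p‖ ^ 2 ≤ ∑ i, ‖Φ.mulVec x i‖ ^ 2 ∧
        ∑ i, ‖Φ.mulVec x i‖ ^ 2 ≤ (1 + δ) * ∑ p, ‖x p‖ ^ 2)

def subCols {M K d : ℕ} (Φ : Matrix (Fin M) (Fin K × Fin d) ℂ) (T : Finset (Fin K)) :
    Matrix (Fin M) ({x // x ∈ T} × Fin d) ℂ :=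
  fun i p => Φ i (p.1.1, p.2)

/-- The Frobenius norm of a matrix. -/
noncomputable def frob {m n : Type*} [Fintype m] [Fintype n] (A : Matrix m n ℂ) : ℝ :=
  Real.sqrt (∑ i, ∑ j, ‖A i j‖ ^ 2)

/- ### Auxiliary lemmas -/

lemma norm_comb (s t : ℝ) (a b : ℂ) :
    ‖(s:ℂ)*a + (t:ℂ)*b‖^2
      = s^2*‖a‖^2 + 2*(s*t)*((starRingEnd ℂ) a * b).re + t^2*‖b‖^2 := by
  simp only [Complex.sq_norm, Complex.normSq_apply, Complex.add_re,
    Complex.add_im, Complex.mul_re, Complex.mul_im, Complex.ofReal_re, Complex.ofReal_im,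
    Complex.conj_re, Complex.conj_im]
  ring

lemma norm_comb_disj (s t : ℝ) (a b : ℂ) (h : a = 0 ∨ b = 0) :
    ‖(s:ℂ)*a + (t:ℂ)*b‖^2 = s^2*‖a‖^2 + t^2*‖b‖^2 := by
  rcases h with h | h <;> simp [h, norm_comb, mul_pow, norm_mul]

lemma sum_ext_eq {K d : ℕ} (T : Finset (Fin K)) {M : Type*} [AddCommMonoid M]
    (F : {x // x ∈ T} → Fin d → M) :
    ∑ p : Fin K × Fin d, (if h : p.1 ∈ T then F ⟨p.1, h⟩ p.2 else 0)
      = ∑ q : {x // x ∈ T} × Fin d, F q.1 q.2 := by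
  rw [Fintype.sum_prod_type, Fintype.sum_prod_type]
  have h1 : (∑ x : Fin K, ∑ j : Fin d, if h : x ∈ T then F ⟨x, h⟩ j else 0)
      = ∑ x ∈ T, ∑ j : Fin d, if h : x ∈ T then F ⟨x, h⟩ j else 0 :=
    (Finset.sum_subset (Finset.subset_univ T)
      (by intro x _ hx; simp [dif_neg hx])).symm
  rw [h1, ← Finset.sum_attach T (fun n => ∑ j : Fin d, if h : n ∈ T then F ⟨n, h⟩ j else 0),
    Finset.univ_eq_attach]
  apply Finset.sum_congr rfl
  intro x _
  apply Finset.sum_congr rfl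
  intro j _
  simp [x.2]

lemma final_real {δ XF ZF PF : ℝ} (hδ0 : 0 < δ) (hδ1 : δ < 1) (hXF : 0 < XF) (hPF : 0 < PF)
    (hZF : 0 ≤ ZF)
    (hi : PF^2 ≤ δ^2*XF*ZF)
    (hii : ∀ t : ℝ, 2*t*PF + (1-δ)*t^2*ZF ≤ 2*δ*XF + t^2*PF) :
    PF ≤ δ^2*(1+δ)*XF := by
  have h1δ : (0:ℝ) < 1 - δ := by linarith
  set u : ℝ := 2*δ*XF/PF with hu_def
  have hu : u * PF = 2*δ*XF := div_mul_cancel₀ _ hPF.ne'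
  have hA := hii u
  have hA2 := mul_le_mul_of_nonneg_right hA (sq_nonneg PF)
  have e0 : u*PF*PF^2 = 2*δ*XF*PF^2 := by rw [hu]
  have e1 : u^2*ZF*PF^2 = 4*δ^2*XF^2*ZF := by
    rw [show u^2*ZF*PF^2 = (u*PF)^2*ZF by ring, hu]; ring
  have e2 : u^2*PF*PF^2 = 4*δ^2*XF^2*PF := by
    rw [show u^2*PF*PF^2 = (u*PF)^2*PF by ring, hu]; ring
  have hA3 : 4*δ*XF*PF^2 + (1-δ)*(4*δ^2*XF^2*ZF) ≤ 2*δ*XF*PF^2 + 4*δ^2*XF^2*PF := by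
    nlinarith [hA2, e0, e1, e2]
  have hi4 : 4*(1-δ)*XF*PF^2 ≤ (1-δ)*(4*δ^2*XF^2*ZF) := by
    nlinarith [mul_le_mul_of_nonneg_left hi
      (by nlinarith : (0:ℝ) ≤ 4*(1-δ)*XF)]
  have h5 : (4-2*δ)*XF*PF^2 ≤ 4*δ^2*XF^2*PF := by nlinarith [hA3, hi4]
  have hpos : (0:ℝ) < (4-2*δ)*XF*PF := by nlinarith [mul_pos hXF hPF]
  have hq : (0:ℝ) ≤ δ^3*XF^2*PF*(1-δ) := by positivity
  nlinarith [h5, hpos, hq]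

lemma derive_main {δ XF ZF PF AF : ℝ} (hδ0 : 0 ≤ δ) (hδ1 : δ < 1)
    (hXF0 : 0 ≤ XF) (hZF0 : 0 ≤ ZF) (hPF0 : 0 ≤ PF)
    (hlow : ∀ s t : ℝ, (1-δ)*(s^2*XF + t^2*ZF) ≤ s^2*AF + 2*(s*t)*PF + t^2*PF)
    (hup : ∀ s t : ℝ, s^2*AF + 2*(s*t)*PF + t^2*PF ≤ (1+δ)*(s^2*XF + t^2*ZF)) :
    PF ≤ δ^2*(1+δ)*XF := by
  have hAFup : AF ≤ (1+δ)*XF := by nlinarith [hup 1 0]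
  have hstar : ∀ s t : ℝ, 4*(s*t)*PF ≤ 2*δ*(s^2*XF + t^2*ZF) := by
    intro s t
    nlinarith [hup s t, hlow s (-t)]
  have hdd : ∀ t : ℝ, 2*t*PF + (1-δ)*t^2*ZF ≤ 2*δ*XF + t^2*PF := by
    intro t
    nlinarith [hlow 1 (-t), hAFup]
  rcases eq_or_lt_of_le hPF0 with h0 | hPFpos
  · have hrhs : (0:ℝ) ≤ δ^2*(1+δ)*XF :=
      mul_nonneg (mul_nonneg (sq_nonneg δ) (by linarith)) hXF0
    linarith [h0.symm ▸ hrhs]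
  · have hPF2δ : PF ≤ 2*δ*XF := by
      nlinarith [hdd 1, mul_nonneg (by linarith : (0:ℝ) ≤ 1-δ) hZF0]
    have hδX : 0 < δ*XF := by nlinarith
    have hδp : 0 < δ := by nlinarith [hδX, hXF0]
    have hXFp : 0 < XF := by nlinarith [hδX, hδ0]
    have hi : PF^2 ≤ δ^2*XF*ZF := by
      nlinarith [hstar PF (δ*XF), mul_pos hδp hXFp, mul_pos hPFpos (mul_pos hδp hXFp)]
    exact final_real hδp hδ1 hXFp hPFpos hZF0 hi hdd

/-- If `X` has chunk support contained in `T₁` (`|T₁| ≤ k₁`), `T₂` is disjoint from `T₁`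
(`|T₂| ≤ k₂`), `P_{(T₂)} = Φ_{[T₂]}(Φ_{[T₂]}ᴴ Φ_{[T₂]})⁻¹ Φ_{[T₂]}ᴴ` is the orthogonal
projection onto the column span of `Φ_{[T₂]}`, and `Φ` satisfies the `(k₁+k₂)`-th order
block-RIP with constant `δ < 1`, then `‖P_{(T₂)} Φ X‖_F ≤ δ √(1+δ) ‖X‖_F`. -/
theorem proj_mul_frob_le {M K d L : ℕ}
    (Φ : Matrix (Fin M) (Fin K × Fin d) ℂ) (k₁ k₂ : ℕ) (δ : ℝ)
    (hδ0 : 0 ≤ δ) (hδ1 : δ < 1) (hRIP : BlockRIPBound Φ (k₁ + k₂) δ)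
    (T₁ T₂ : Finset (Fin K)) (hdisj : Disjoint T₁ T₂)
    (hT₁ : T₁.card ≤ k₁) (hT₂ : T₂.card ≤ k₂)
    (X : Matrix (Fin K × Fin d) (Fin L) ℂ)
    (hsupp : ∀ n : Fin K, n ∉ T₁ → ∀ j l, X (n, j) l = 0)
    (P : Matrix (Fin M) (Fin M) ℂ)
    (hP : P = subCols Φ T₂ * ((subCols Φ T₂)ᴴ * subCols Φ T₂)⁻¹ * (subCols Φ T₂)ᴴ) :
    frob (P * (Φ * X)) ≤ δ * Real.sqrt (1 + δ) * frob X := by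
  classical
  set A := subCols Φ T₂ with hA_def
  -- vector-level RIP for support inside T₁ ∪ T₂
  have hRIPv : ∀ (w : (Fin K × Fin d) → ℂ), (∀ p, w p ≠ 0 → p.1 ∈ T₁ ∪ T₂) →
      ((1-δ) * ∑ p, ‖w p‖^2 ≤ ∑ i, ‖Φ.mulVec w i‖^2 ∧
        ∑ i, ‖Φ.mulVec w i‖^2 ≤ (1+δ) * ∑ p, ‖w p‖^2) := by
    intro w hw
    apply hRIP
    calc {n : Fin K | ∃ j, w (n, j) ≠ 0}.ncard
        ≤ (↑(T₁ ∪ T₂) : Set (Fin K)).ncard := by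
          apply Set.ncard_le_ncard
          · rintro n ⟨j, hj⟩
            exact Finset.mem_coe.mpr (hw (n, j) hj)
          · exact (T₁ ∪ T₂).finite_toSet
      _ = (T₁ ∪ T₂).card := Set.ncard_coe_finset _
      _ ≤ T₁.card + T₂.card := Finset.card_union_le _ _
      _ ≤ k₁ + k₂ := Nat.add_le_add hT₁ hT₂
  -- extension of vectors supported on T₂
  have hmulVec_ext : ∀ v : ({x // x ∈ T₂} × Fin d) → ℂ,
      Φ.mulVec (fun p => if h : p.1 ∈ T₂ then v (⟨p.1, h⟩, p.2) else 0) = A.mulVec v := by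
    intro v
    funext i
    show (∑ p : Fin K × Fin d, Φ i p * (if h : p.1 ∈ T₂ then v (⟨p.1, h⟩, p.2) else 0)) = _
    have : (∑ p : Fin K × Fin d, Φ i p * (if h : p.1 ∈ T₂ then v (⟨p.1, h⟩, p.2) else 0))
        = ∑ p : Fin K × Fin d,
            (if h : p.1 ∈ T₂ then A i (⟨p.1, h⟩, p.2) * v (⟨p.1, h⟩, p.2) else 0) := by
      apply Finset.sum_congr rfl
      intro p _
      by_cases h : p.1 ∈ T₂ <;> simp [h, hA_def, subCols]
    rw [this, sum_ext_eq T₂ (fun q j => A i (q, j) * v (q, j))]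
    simp [Matrix.mulVec, dotProduct]
  have hext_supp : ∀ (v : ({x // x ∈ T₂} × Fin d) → ℂ) (p : Fin K × Fin d),
      (if h : p.1 ∈ T₂ then v (⟨p.1, h⟩, p.2) else 0) ≠ 0 → p.1 ∈ T₁ ∪ T₂ := by
    intro v p hp
    by_cases h : p.1 ∈ T₂
    · exact Finset.mem_union_right _ h
    · simp [h] at hp
  -- injectivity of A, hence invertibility of AᴴA
  have hAinj : ∀ v : ({x // x ∈ T₂} × Fin d) → ℂ, A.mulVec v = 0 → v = 0 := by
    intro v hv
    have hlow := (hRIPv (fun p => if h : p.1 ∈ T₂ then v (⟨p.1, h⟩, p.2) else 0)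
      (hext_supp v)).1
    rw [hmulVec_ext v, hv] at hlow
    simp only [Pi.zero_apply, norm_zero, ne_eq, OfNat.ofNat_ne_zero, not_false_eq_true,
      zero_pow, Finset.sum_const_zero] at hlow
    have hnn : (0:ℝ) ≤ ∑ p : Fin K × Fin d,
        ‖if h : p.1 ∈ T₂ then v (⟨p.1, h⟩, p.2) else 0‖^2 :=
      Finset.sum_nonneg fun _ _ => sq_nonneg _
    have hsum0 : ∑ p : Fin K × Fin d,
        ‖if h : p.1 ∈ T₂ then v (⟨p.1, h⟩, p.2) else 0‖^2 = 0 := by nlinarith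
    have hz := (Finset.sum_eq_zero_iff_of_nonneg
      (fun p _ => sq_nonneg ‖if h : p.1 ∈ T₂ then v (⟨p.1, h⟩, p.2) else 0‖)).mp hsum0
    funext q
    have := hz (q.1.1, q.2) (Finset.mem_univ _)
    simp only [q.1.2, dif_pos] at this
    have hv0 : v (⟨q.1.1, q.1.2⟩, q.2) = 0 := by
      have hn := pow_eq_zero_iff (n := 2) (by norm_num) |>.mp this
      exact norm_eq_zero.mp hn
    simpa using hv0
  have hGdet : IsUnit (Aᴴ * A).det := by
    rw [isUnit_iff_ne_zero]
    intro h0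
    obtain ⟨v, hv0, hGv⟩ := Matrix.exists_mulVec_eq_zero_iff.mpr h0
    apply hv0
    apply hAinj
    have h1 : star v ⬝ᵥ ((Aᴴ * A) *ᵥ v) = star (A *ᵥ v) ⬝ᵥ (A *ᵥ v) := by
      rw [← Matrix.mulVec_mulVec, Matrix.dotProduct_mulVec, ← Matrix.star_mulVec]
    rw [hGv] at h1
    simp only [dotProduct_zero] at h1
    funext i
    have h2 : ∑ j, star ((A *ᵥ v) j) * (A *ᵥ v) j = 0 := h1.symm
    have h3 : ∑ j, ((‖(A *ᵥ v) j‖^2 : ℝ) : ℂ) = 0 := by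
      rw [← h2]
      apply Finset.sum_congr rfl
      intro j _
      have hcast : ((‖(A *ᵥ v) j‖^2 : ℝ) : ℂ) = (Complex.normSq ((A *ᵥ v) j) : ℂ) := by
        norm_cast
        rw [Complex.sq_norm]
      rw [hcast, Complex.normSq_eq_conj_mul_self]
      rfl
    have h4 : ∑ j, ‖(A *ᵥ v) j‖^2 = 0 := by exact_mod_cast h3
    have h5 := (Finset.sum_eq_zero_iff_of_nonneg
      (fun j _ => sq_nonneg ‖(A *ᵥ v) j‖)).mp h4 i (Finset.mem_univ _)
    have hn := pow_eq_zero_iff (n := 2) (by norm_num) |>.mp h5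
    simpa using norm_eq_zero.mp hn
  have hGiG : (Aᴴ * A)⁻¹ * (Aᴴ * A) = 1 := Matrix.nonsing_inv_mul _ hGdet
  have hGGi : (Aᴴ * A) * (Aᴴ * A)⁻¹ = 1 := Matrix.mul_nonsing_inv _ hGdet
  have hGH : ((Aᴴ * A)⁻¹)ᴴ = (Aᴴ * A)⁻¹ := by
    rw [Matrix.conjTranspose_nonsing_inv]
    congr 1
    rw [conjTranspose_mul, conjTranspose_conjTranspose]
  have hPH : Pᴴ = P := by
    rw [hP]
    simp only [conjTranspose_mul, conjTranspose_conjTranspose, hGH, Matrix.mul_assoc]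
  have hPP : P * P = P := by
    rw [hP]
    simp only [Matrix.mul_assoc]
    rw [← Matrix.mul_assoc Aᴴ A, ← Matrix.mul_assoc (Aᴴ * A) ((Aᴴ * A)⁻¹), hGGi,
      Matrix.one_mul]
  -- main objects
  obtain ⟨Y, hY_def⟩ : ∃ Y, Y = Φ * X := ⟨_, rfl⟩
  obtain ⟨Qm, hQm_def⟩ : ∃ Qm, Qm = P * Y := ⟨_, rfl⟩
  obtain ⟨Wc, hWc_def⟩ : ∃ Wc, Wc = (Aᴴ * A)⁻¹ * (Aᴴ * Y) := ⟨_, rfl⟩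
  obtain ⟨Zfull, hZfull_def⟩ : ∃ Zfull : Matrix (Fin K × Fin d) (Fin L) ℂ,
    Zfull = fun p l => if h : p.1 ∈ T₂ then Wc (⟨p.1, h⟩, p.2) l else 0 := ⟨_, rfl⟩
  rw [← hY_def, ← hQm_def]
  have hentry : ∀ (N : Matrix (Fin K × Fin d) (Fin L) ℂ) i l,
      (Φ * N) i l = Φ.mulVec (fun p => N p l) i := by
    intro N i l
    simp [Matrix.mul_apply, Matrix.mulVec, dotProduct]
  have hΦZ : Φ * Zfull = Qm := by
    ext i l
    rw [hentry]
    have hcol : (fun p => Zfull p l) =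
        (fun p => if h : p.1 ∈ T₂ then (fun q => Wc q l) (⟨p.1, h⟩, p.2) else 0) := by
      funext p; rw [hZfull_def]
    rw [hcol, hmulVec_ext (fun q => Wc q l)]
    have hAW : A.mulVec (fun q => Wc q l) i = (A * Wc) i l := by
      simp [Matrix.mul_apply, Matrix.mulVec, dotProduct]
    rw [hAW, hWc_def, hQm_def, hP]
    simp only [Matrix.mul_assoc]
  -- matrix-level RIP
  have hRIPM : ∀ (Wm : Matrix (Fin K × Fin d) (Fin L) ℂ),
      (∀ p l, Wm p l ≠ 0 → p.1 ∈ T₁ ∪ T₂) →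
      ((1-δ) * (∑ p, ∑ l, ‖Wm p l‖^2) ≤ (∑ i, ∑ l, ‖(Φ * Wm) i l‖^2) ∧
        (∑ i, ∑ l, ‖(Φ * Wm) i l‖^2) ≤ (1+δ) * (∑ p, ∑ l, ‖Wm p l‖^2)) := by
    intro Wm hWm
    have hcol : ∀ l, ((1-δ) * ∑ p, ‖Wm p l‖^2 ≤ ∑ i, ‖(Φ * Wm) i l‖^2 ∧
        ∑ i, ‖(Φ * Wm) i l‖^2 ≤ (1+δ) * ∑ p, ‖Wm p l‖^2) := by
      intro l
      have h := hRIPv (fun p => Wm p l) (fun p hp => hWm p l hp)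
      simpa [hentry] using h
    constructor
    · rw [Finset.sum_comm (f := fun p l => ‖Wm p l‖^2),
        Finset.sum_comm (f := fun i l => ‖(Φ * Wm) i l‖^2), Finset.mul_sum]
      exact Finset.sum_le_sum fun l _ => (hcol l).1
    · rw [Finset.sum_comm (f := fun p l => ‖Wm p l‖^2),
        Finset.sum_comm (f := fun i l => ‖(Φ * Wm) i l‖^2), Finset.mul_sum]
      exact Finset.sum_le_sum fun l _ => (hcol l).2
  obtain ⟨XF, hXF_def⟩ : ∃ XF : ℝ, XF = ∑ p, ∑ l, ‖X p l‖^2 := ⟨_, rfl⟩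
  obtain ⟨ZF, hZF_def⟩ : ∃ ZF : ℝ, ZF = ∑ p, ∑ l, ‖Zfull p l‖^2 := ⟨_, rfl⟩
  obtain ⟨PF, hPF_def⟩ : ∃ PF : ℝ, PF = ∑ i, ∑ l, ‖Qm i l‖^2 := ⟨_, rfl⟩
  obtain ⟨AF, hAF_def⟩ : ∃ AF : ℝ, AF = ∑ i, ∑ l, ‖Y i l‖^2 := ⟨_, rfl⟩
  obtain ⟨CF, hCF_def⟩ : ∃ CF : ℝ,
    CF = ∑ i, ∑ l, ((starRingEnd ℂ) (Y i l) * Qm i l).re := ⟨_, rfl⟩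
  -- support facts
  have hXsupp : ∀ (p : Fin K × Fin d) l, X p l ≠ 0 → p.1 ∈ T₁ := by
    intro p l h
    by_contra hn
    exact h (by simpa using hsupp p.1 hn p.2 l)
  have hdisj' : ∀ (p : Fin K × Fin d) l, X p l = 0 ∨ Zfull p l = 0 := by
    intro p l
    by_cases hx : X p l = 0
    · exact Or.inl hx
    · right
      have h1 := hXsupp p l hx
      have h2 : p.1 ∉ T₂ := Finset.disjoint_left.mp hdisj h1
      simp [hZfull_def, h2]
  -- combined matrices
  have hWst_supp : ∀ s t : ℝ, ∀ (p : Fin K × Fin d) l,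
      ((s:ℂ) • X + (t:ℂ) • Zfull) p l ≠ 0 → p.1 ∈ T₁ ∪ T₂ := by
    intro s t p l h
    by_cases hx : X p l = 0
    · by_cases hz : Zfull p l = 0
      · exfalso; apply h; simp [Matrix.add_apply, Matrix.smul_apply, hx, hz]
      · refine Finset.mem_union_right _ ?_
        by_contra hn
        exact hz (by simp [hZfull_def, hn])
    · exact Finset.mem_union_left _ (hXsupp p l hx)
  have hWst_norm : ∀ s t : ℝ,
      (∑ p, ∑ l, ‖((s:ℂ) • X + (t:ℂ) • Zfull) p l‖^2) = s^2*XF + t^2*ZF := by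
    intro s t
    have hpt : ∀ (p : Fin K × Fin d) l, ‖((s:ℂ) • X + (t:ℂ) • Zfull) p l‖^2
        = s^2*‖X p l‖^2 + t^2*‖Zfull p l‖^2 := by
      intro p l
      have : ((s:ℂ) • X + (t:ℂ) • Zfull) p l = (s:ℂ) * X p l + (t:ℂ) * Zfull p l := by
        simp [Matrix.add_apply, Matrix.smul_apply, smul_eq_mul]
      rw [this, norm_comb_disj s t _ _ (hdisj' p l)]
    simp_rw [hpt]
    rw [hXF_def, hZF_def]
    simp only [Finset.sum_add_distrib, ← Finset.mul_sum]
  have hΦWst : ∀ s t : ℝ, Φ * ((s:ℂ) • X + (t:ℂ) • Zfull) = (s:ℂ) • Y + (t:ℂ) • Qm := by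
    intro s t
    rw [Matrix.mul_add, Matrix.mul_smul, Matrix.mul_smul, hΦZ, ← hY_def]
  have hΦWst_norm : ∀ s t : ℝ,
      (∑ i, ∑ l, ‖(Φ * ((s:ℂ) • X + (t:ℂ) • Zfull)) i l‖^2)
        = s^2*AF + 2*(s*t)*CF + t^2*PF := by
    intro s t
    have hpt : ∀ i l, ‖(Φ * ((s:ℂ) • X + (t:ℂ) • Zfull)) i l‖^2
        = s^2*‖Y i l‖^2 + 2*(s*t)*((starRingEnd ℂ) (Y i l) * Qm i l).re + t^2*‖Qm i l‖^2 := by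
      intro i l
      rw [hΦWst s t]
      have : ((s:ℂ) • Y + (t:ℂ) • Qm) i l = (s:ℂ) * Y i l + (t:ℂ) * Qm i l := by
        simp [Matrix.add_apply, Matrix.smul_apply, smul_eq_mul]
      rw [this, norm_comb]
    simp_rw [hpt]
    rw [hAF_def, hCF_def, hPF_def]
    simp only [Finset.sum_add_distrib, ← Finset.mul_sum]
  -- CF = PF
  have hYQ : Yᴴ * Qm = Qmᴴ * Qm := by
    have h1 : Qmᴴ = Yᴴ * P := by rw [hQm_def, conjTranspose_mul, hPH]
    rw [h1, Matrix.mul_assoc Yᴴ P Qm, hQm_def, ← Matrix.mul_assoc P P Y, hPP]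
  have hCF : CF = PF := by
    have hc : ∀ l, (∑ i, (starRingEnd ℂ) (Y i l) * Qm i l)
        = ∑ i, ((‖Qm i l‖^2 : ℝ) : ℂ) := by
      intro l
      have h := congrArg (fun Mx => Mx l l) hYQ
      simp only [Matrix.mul_apply, Matrix.conjTranspose_apply, Complex.star_def] at h
      rw [h]
      apply Finset.sum_congr rfl
      intro i _
      have hcast : ((‖Qm i l‖^2 : ℝ) : ℂ) = (Complex.normSq (Qm i l) : ℂ) := by
        norm_cast
        rw [Complex.sq_norm]
      rw [hcast, Complex.normSq_eq_conj_mul_self]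
    rw [hCF_def, hPF_def]
    have : ∀ l, (∑ i, ((starRingEnd ℂ) (Y i l) * Qm i l).re) = ∑ i, ‖Qm i l‖^2 := by
      intro l
      have h := congrArg Complex.re (hc l)
      rw [Complex.re_sum, Complex.re_sum] at h
      simpa only [Complex.ofReal_re] using h
    rw [Finset.sum_comm (f := fun i l => ((starRingEnd ℂ) (Y i l) * Qm i l).re),
      Finset.sum_comm (f := fun i l => ‖Qm i l‖^2)]
    exact Finset.sum_congr rfl fun l _ => this l
  -- the two families of inequalities
  have hlow : ∀ s t : ℝ, (1-δ)*(s^2*XF + t^2*ZF) ≤ s^2*AF + 2*(s*t)*PF + t^2*PF := by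
    intro s t
    have h := (hRIPM ((s:ℂ) • X + (t:ℂ) • Zfull) (hWst_supp s t)).1
    rw [hWst_norm s t, hΦWst_norm s t, hCF] at h
    exact h
  have hup : ∀ s t : ℝ, s^2*AF + 2*(s*t)*PF + t^2*PF ≤ (1+δ)*(s^2*XF + t^2*ZF) := by
    intro s t
    have h := (hRIPM ((s:ℂ) • X + (t:ℂ) • Zfull) (hWst_supp s t)).2
    rw [hWst_norm s t, hΦWst_norm s t, hCF] at h
    exact h
  have hXF0 : 0 ≤ XF := hXF_def ▸
    (Finset.sum_nonneg fun _ _ => Finset.sum_nonneg fun _ _ => sq_nonneg _)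
  have hZF0 : 0 ≤ ZF := hZF_def ▸
    (Finset.sum_nonneg fun _ _ => Finset.sum_nonneg fun _ _ => sq_nonneg _)
  have hPF0 : 0 ≤ PF := hPF_def ▸
    (Finset.sum_nonneg fun _ _ => Finset.sum_nonneg fun _ _ => sq_nonneg _)
  have hmain : PF ≤ δ^2*(1+δ)*XF := derive_main hδ0 hδ1 hXF0 hZF0 hPF0 hlow hup
  -- conclude
  have hfrobQ : frob Qm = Real.sqrt PF := by rw [hPF_def]; rfl
  have hfrobX : frob X = Real.sqrt XF := by rw [hXF_def]; rfl
  rw [hfrobQ, hfrobX]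
  have h1δ' : (0:ℝ) ≤ 1+δ := by linarith
  have hkey : Real.sqrt (δ^2*(1+δ)*XF) = δ * Real.sqrt (1+δ) * Real.sqrt XF := by
    rw [show δ^2*(1+δ)*XF = (δ*Real.sqrt (1+δ))^2 * XF by
        rw [mul_pow, Real.sq_sqrt h1δ'],
      Real.sqrt_mul (sq_nonneg _), Real.sqrt_sq (by positivity)]
  calc Real.sqrt PF ≤ Real.sqrt (δ^2*(1+δ)*XF) := Real.sqrt_le_sqrt hmain
    _ = δ * Real.sqrt (1+δ) * Real.sqrt XF := hkey
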